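/- arXiv:2105.11524 — 4 statements merged into one kernel-verified Lean document; each statement's English description precedes it below -/
import Mathlib

section
/- Let z = x + iy ∈ ℂ with x ∈ ℝ. If u, v, r, s ∈ (ℂ^l)^ℤ satisfy H u = z u, H r = z r, H v = x v and H s = x s, then for all integers n > m: W_{[u − v, conj(r) − conj(s)]}(n+1) − W_{[u − v, conj(r) − conj(s)]}(m) = i y ∑_{k=m}^{n} ( 2⟨u_k, r_k⟩ − ⟨u_k, s_k⟩ − ⟨v_k, r_k⟩ ), where ⟨a,b⟩ denotes the Hermitian inner product on ℂ^l. -/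
open MeasureTheory Matrix Filter Topology Finset

noncomputable section

/-- Complexification of a real matrix. -/
def cx {l : ℕ} (A : Matrix (Fin l) (Fin l) ℝ) : Matrix (Fin l) (Fin l) ℂ :=
  A.map (fun a => (a : ℂ))

/-- The (formal) action of the ergodic matrix-valued Jacobi operator `H_ω` on a
two-sided sequence `u : ℤ → ℂ^l`. -/
def jacobiAct {Ω : Type*} {l : ℕ} (D V : Ω → Matrix (Fin l) (Fin l) ℝ)
    (T : Equiv.Perm Ω) (ω : Ω) (u : ℤ → Fin l → ℂ) (n : ℤ) : Fin l → ℂ :=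
  cx (D ((T ^ (n - 1)) ω)) *ᵥ u (n - 1) + cx (D ((T ^ n) ω)) *ᵥ u (n + 1)
    + cx (V ((T ^ n) ω)) *ᵥ u n

/-- The Wronskian `W_{[u,v]}(n) = u_nᵗ D_{n-1} v_{n-1} − v_nᵗ D_{n-1} u_{n-1}`,
where `D_n = D(T^n ω)`. -/
def wronskian {Ω : Type*} {l : ℕ} (D : Ω → Matrix (Fin l) (Fin l) ℝ)
    (T : Equiv.Perm Ω) (ω : Ω) (u v : ℤ → Fin l → ℂ) (n : ℤ) : ℂ :=
  u n ⬝ᵥ (cx (D ((T ^ (n - 1)) ω)) *ᵥ v (n - 1))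
    - v n ⬝ᵥ (cx (D ((T ^ (n - 1)) ω)) *ᵥ u (n - 1))

/-- The Hermitian inner product `⟨a,b⟩ = ∑ i, a i * conj (b i)` on `ℂ^l`. -/
def hinner {l : ℕ} (a b : Fin l → ℂ) : ℂ := ∑ i, a i * starRingEnd ℂ (b i)

lemma cx_isSymm {l : ℕ} {A : Matrix (Fin l) (Fin l) ℝ} (h : A.IsSymm) : (cx A).IsSymm := by
  unfold cx Matrix.IsSymm at *
  rw [← Matrix.transpose_map, h]

lemma dot_cx_symm {l : ℕ} {A : Matrix (Fin l) (Fin l) ℝ} (h : A.IsSymm)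
    (v w : Fin l → ℂ) : v ⬝ᵥ (cx A *ᵥ w) = w ⬝ᵥ (cx A *ᵥ v) := by
  rw [Matrix.dotProduct_mulVec, ← Matrix.vecMul_transpose, (cx_isSymm h :)]
  exact dotProduct_comm _ _

lemma cx_mulVec_conj_apply {l : ℕ} (A : Matrix (Fin l) (Fin l) ℝ) (w : Fin l → ℂ) (i : Fin l) :
    (cx A *ᵥ (fun j => starRingEnd ℂ (w j))) i = starRingEnd ℂ ((cx A *ᵥ w) i) := by
  simp [cx, Matrix.mulVec, dotProduct, map_sum, Matrix.map_apply]

lemma jacobiAct_conj {Ω : Type*} {l : ℕ} (D V : Ω → Matrix (Fin l) (Fin l) ℝ)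
    (T : Equiv.Perm Ω) (ω : Ω) (r : ℤ → Fin l → ℂ) (z : ℂ)
    (hr : ∀ n : ℤ, jacobiAct D V T ω r n = z • r n) (n : ℤ) :
    jacobiAct D V T ω (fun k i => starRingEnd ℂ (r k i)) n
      = (starRingEnd ℂ z) • (fun i => starRingEnd ℂ (r n i)) := by
  funext i
  have h' := congrFun (hr n) i
  simp only [jacobiAct, Pi.add_apply, Pi.smul_apply, smul_eq_mul] at h' ⊢
  rw [cx_mulVec_conj_apply, cx_mulVec_conj_apply, cx_mulVec_conj_apply,
    ← map_add, ← map_add, h']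
  exact map_mul (starRingEnd ℂ) _ _

/-- If `H u = z u`, `H r = z r`, `H v = x v`, `H s = x s` with `z = x + iy`, then
`W_{[u − v, conj r − conj s]}(n+1) − W_{[u − v, conj r − conj s]}(m)
  = i y ∑_{k=m}^{n} (2⟨u_k, r_k⟩ − ⟨u_k, s_k⟩ − ⟨v_k, r_k⟩)`. -/
theorem wronskian_im_formula
    {Ω : Type*} [MeasurableSpace Ω] (ν : Measure Ω) [IsProbabilityMeasure ν]
    (T : Equiv.Perm Ω) (hT : Ergodic (⇑T) ν)
    {l : ℕ} (D V : Ω → Matrix (Fin l) (Fin l) ℝ)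
    (hDsymm : ∀ ω, (D ω).IsSymm) (hDinv : ∀ ω, IsUnit (D ω))
    (hDbdd : ∃ C : ℝ, ∀ ω i j, |D ω i j| ≤ C)
    (hVsymm : ∀ ω, (V ω).IsSymm)
    (ω : Ω) (x y : ℝ) (z : ℂ) (hz : z = (x : ℂ) + Complex.I * (y : ℂ))
    (u v r s : ℤ → Fin l → ℂ)
    (hu : ∀ n : ℤ, jacobiAct D V T ω u n = z • u n)
    (hr : ∀ n : ℤ, jacobiAct D V T ω r n = z • r n)
    (hv : ∀ n : ℤ, jacobiAct D V T ω v n = (x : ℂ) • v n)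
    (hs : ∀ n : ℤ, jacobiAct D V T ω s n = (x : ℂ) • s n)
    (m n : ℤ) (hmn : m < n) :
    wronskian D T ω (fun k => u k - v k)
        (fun k i => starRingEnd ℂ (r k i) - starRingEnd ℂ (s k i)) (n + 1)
      - wronskian D T ω (fun k => u k - v k)
        (fun k i => starRingEnd ℂ (r k i) - starRingEnd ℂ (s k i)) m
    = Complex.I * (y : ℂ) * ∑ k ∈ Finset.Icc m n,
        (2 * hinner (u k) (r k) - hinner (u k) (s k) - hinner (v k) (r k)) := by
  set a : ℤ → Fin l → ℂ := fun k => u k - v k with ha_def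
  set b : ℤ → Fin l → ℂ := fun k i => starRingEnd ℂ (r k i) - starRingEnd ℂ (s k i) with hb_def
  set W : ℤ → ℂ := wronskian D T ω a b with hW_def
  have hcr := jacobiAct_conj D V T ω r z hr
  have hcs : ∀ n : ℤ, jacobiAct D V T ω (fun k i => starRingEnd ℂ (s k i)) n
      = ((x : ℂ)) • (fun i => starRingEnd ℂ (s n i)) := by
    intro n
    have := jacobiAct_conj D V T ω s ((x : ℂ)) hs n
    simpa using this
  have hzbar : starRingEnd ℂ z = (x : ℂ) - Complex.I * (y : ℂ) := by
    rw [hz]; simp [Complex.conj_ofReal]; ring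
  -- the one-step formula
  have step : ∀ k : ℤ, W (k + 1) - W k
      = Complex.I * (y : ℂ) *
        (2 * hinner (u k) (r k) - hinner (u k) (s k) - hinner (v k) (r k)) := by
    intro k
    have ea : cx (D ((T ^ k) ω)) *ᵥ a (k + 1)
        = (z • u k - (x : ℂ) • v k) - cx (D ((T ^ (k - 1)) ω)) *ᵥ a (k - 1)
          - cx (V ((T ^ k) ω)) *ᵥ a k := by
      have h1 := hu k; have h2 := hv k
      simp only [jacobiAct] at h1 h2
      have e1 : cx (D ((T ^ k) ω)) *ᵥ u (k + 1)
          = z • u k - cx (D ((T ^ (k - 1)) ω)) *ᵥ u (k - 1)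
            - cx (V ((T ^ k) ω)) *ᵥ u k := by rw [← h1]; abel
      have e2 : cx (D ((T ^ k) ω)) *ᵥ v (k + 1)
          = (x : ℂ) • v k - cx (D ((T ^ (k - 1)) ω)) *ᵥ v (k - 1)
            - cx (V ((T ^ k) ω)) *ᵥ v k := by rw [← h2]; abel
      show cx (D ((T ^ k) ω)) *ᵥ (u (k + 1) - v (k + 1)) = _
      rw [Matrix.mulVec_sub, e1, e2,
        show a (k - 1) = u (k - 1) - v (k - 1) from rfl,
        show a k = u k - v k from rfl, Matrix.mulVec_sub, Matrix.mulVec_sub]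
      abel
    have eb : cx (D ((T ^ k) ω)) *ᵥ b (k + 1)
        = ((starRingEnd ℂ z) • (fun i => starRingEnd ℂ (r k i))
            - (x : ℂ) • (fun i => starRingEnd ℂ (s k i)))
          - cx (D ((T ^ (k - 1)) ω)) *ᵥ b (k - 1)
          - cx (V ((T ^ k) ω)) *ᵥ b k := by
      have h1 := hcr k; have h2 := hcs k
      simp only [jacobiAct] at h1 h2
      have e1 : cx (D ((T ^ k) ω)) *ᵥ (fun i => starRingEnd ℂ (r (k + 1) i))
          = (starRingEnd ℂ z) • (fun i => starRingEnd ℂ (r k i))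
            - cx (D ((T ^ (k - 1)) ω)) *ᵥ (fun i => starRingEnd ℂ (r (k - 1) i))
            - cx (V ((T ^ k) ω)) *ᵥ (fun i => starRingEnd ℂ (r k i)) := by
        rw [← h1]; abel
      have e2 : cx (D ((T ^ k) ω)) *ᵥ (fun i => starRingEnd ℂ (s (k + 1) i))
          = (x : ℂ) • (fun i => starRingEnd ℂ (s k i))
            - cx (D ((T ^ (k - 1)) ω)) *ᵥ (fun i => starRingEnd ℂ (s (k - 1) i))
            - cx (V ((T ^ k) ω)) *ᵥ (fun i => starRingEnd ℂ (s k i)) := by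
        rw [← h2]; abel
      show cx (D ((T ^ k) ω)) *ᵥ
          ((fun i => starRingEnd ℂ (r (k + 1) i)) - (fun i => starRingEnd ℂ (s (k + 1) i))) = _
      rw [Matrix.mulVec_sub, e1, e2,
        show b (k - 1) = (fun i => starRingEnd ℂ (r (k - 1) i))
          - (fun i => starRingEnd ℂ (s (k - 1) i)) from rfl,
        show b k = (fun i => starRingEnd ℂ (r k i))
          - (fun i => starRingEnd ℂ (s k i)) from rfl,
        Matrix.mulVec_sub, Matrix.mulVec_sub]
      abel
    have hV : b k ⬝ᵥ (cx (V ((T ^ k) ω)) *ᵥ a k) = a k ⬝ᵥ (cx (V ((T ^ k) ω)) *ᵥ b k) :=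
      dot_cx_symm (hVsymm _) _ _
    have h1 : b k ⬝ᵥ u k = hinner (u k) (r k) - hinner (u k) (s k) := by
      simp [hb_def, hinner, dotProduct, sub_mul, mul_sub, Finset.sum_sub_distrib, mul_comm]
    have h2 : b k ⬝ᵥ v k = hinner (v k) (r k) - hinner (v k) (s k) := by
      simp [hb_def, hinner, dotProduct, sub_mul, mul_sub, Finset.sum_sub_distrib, mul_comm]
    have h3 : a k ⬝ᵥ (fun i => starRingEnd ℂ (r k i))
        = hinner (u k) (r k) - hinner (v k) (r k) := by
      simp [ha_def, hinner, dotProduct, sub_mul, mul_sub, Finset.sum_sub_distrib]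
    have h4 : a k ⬝ᵥ (fun i => starRingEnd ℂ (s k i))
        = hinner (u k) (s k) - hinner (v k) (s k) := by
      simp [ha_def, hinner, dotProduct, sub_mul, mul_sub, Finset.sum_sub_distrib]
    have hW1 : W (k + 1) = b k ⬝ᵥ (cx (D ((T ^ k) ω)) *ᵥ a (k + 1))
        - a k ⬝ᵥ (cx (D ((T ^ k) ω)) *ᵥ b (k + 1)) := by
      rw [hW_def]
      unfold wronskian
      rw [show k + 1 - 1 = k by ring,
        dot_cx_symm (hDsymm _) (a (k + 1)) (b k), dot_cx_symm (hDsymm _) (b (k + 1)) (a k)]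
    rw [hW1, ea, eb, hW_def]
    unfold wronskian
    simp only [dotProduct_sub, dotProduct_smul, smul_eq_mul]
    rw [hV, h1, h2, h3, h4, hzbar, hz]
    ring
  -- telescoping
  have key : ∀ N : ℤ, m ≤ N → W (N + 1) - W m
      = Complex.I * (y : ℂ) * ∑ k ∈ Finset.Icc m N,
          (2 * hinner (u k) (r k) - hinner (u k) (s k) - hinner (v k) (r k)) := by
    intro N hN
    refine Int.le_induction (motive := fun N _ => W (N + 1) - W m
      = Complex.I * (y : ℂ) * ∑ k ∈ Finset.Icc m N,
          (2 * hinner (u k) (r k) - hinner (u k) (s k) - hinner (v k) (r k))) ?_ ?_ N hN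
    · beta_reduce
      rw [Finset.Icc_self, Finset.sum_singleton]; exact step m
    · intro N hN ih
      beta_reduce at ih ⊢
      have hins : Finset.Icc m (N + 1) = insert (N + 1) (Finset.Icc m N) := by
        ext j; simp only [Finset.mem_Icc, Finset.mem_insert]; omega
      rw [hins, Finset.sum_insert (by simp [Finset.mem_Icc])]
      have := step (N + 1)
      rw [mul_add]
      calc W (N + 1 + 1) - W m = (W (N + 1 + 1) - W (N + 1)) + (W (N + 1) - W m) := by ring
        _ = _ := by rw [this, ih]
  exact key n hmn.le
end
end

section
/- Let z ∈ ℂ∖ℝ, ω ∈ Ω, let (F_n(z,ω))_{n≥0} be the Jost solutions and M^φ(z,ω) the associated Weyl–Titchmarsh function. Then: (a) M^φ(z,ω) is a symmetric matrix, i.e. (M^φ(z,ω))^t = M^φ(z,ω); and (b) D(ω) · Im[M^φ(z,ω)] · D(ω) = Im[z] · ∑_{k=1}^{∞} F_k(z,ω)* F_k(z,ω). -/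
open MeasureTheory Matrix Filter Topology Finset

noncomputable section

/-- The imaginary part of a complex square matrix: `Im[A] = (A − Aᴴ)/(2i)`. -/
def matIm {m : Type*} (A : Matrix m m ℂ) : Matrix m m ℂ :=
  (2 * Complex.I)⁻¹ • (A - Aᴴ)

/-- `F` is a matrix solution of the eigenvalue equation
`D_{n-1} F_{n-1} + D_n F_{n+1} + V_n F_n = z F_n` (on `ℤ_+`, for `n ≥ 1`). -/
def IsMatSol {l : ℕ} (Ds Vs : ℕ → Matrix (Fin l) (Fin l) ℂ) (z : ℂ)
    (F : ℕ → Matrix (Fin l) (Fin l) ℂ) : Prop :=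
  ∀ n : ℕ, 1 ≤ n → Ds (n - 1) * F (n - 1) + Ds n * F (n + 1) + Vs n * F n = z • F n

/-- `F` is the Jost solution: a matrix solution of the eigenvalue equation with
`F_0 = I` and `∑_n ‖F_n‖² < ∞`. -/
def IsJost {l : ℕ} (Ds Vs : ℕ → Matrix (Fin l) (Fin l) ℂ) (z : ℂ)
    (F : ℕ → Matrix (Fin l) (Fin l) ℂ) : Prop :=
  IsMatSol Ds Vs z F ∧ F 0 = 1 ∧
    Summable (fun n : ℕ => ∑ i, ∑ j, ‖F n i j‖ ^ 2)

section aux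
variable {l : ℕ}

lemma cx_transp {A : Matrix (Fin l) (Fin l) ℝ} (h : A.IsSymm) : (cx A)ᵀ = cx A := by
  ext i j; simp [cx, ← h.apply i j]

lemma cx_conjT {A : Matrix (Fin l) (Fin l) ℝ} (h : A.IsSymm) : (cx A)ᴴ = cx A := by
  ext i j; simp [cx, Matrix.conjTranspose_apply, ← h.apply i j]

lemma matHasSum_iff {f : ℕ → Matrix (Fin l) (Fin l) ℂ} {A : Matrix (Fin l) (Fin l) ℂ} :
    HasSum f A ↔ ∀ i j, HasSum (fun n => f n i j) (A i j) := by
  exact Pi.hasSum.trans (forall_congr' fun i => Pi.hasSum)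

lemma matTendsto_iff {f : ℕ → Matrix (Fin l) (Fin l) ℂ} {A : Matrix (Fin l) (Fin l) ℂ} :
    Tendsto f atTop (𝓝 A) ↔ ∀ i j, Tendsto (fun n => f n i j) atTop (𝓝 (A i j)) := by
  exact tendsto_pi_nhds.trans (forall_congr' fun i => tendsto_pi_nhds)

lemma tendsto_mul3 {P Q R : ℕ → Matrix (Fin l) (Fin l) ℂ} {C : ℝ}
    (hP : ∀ i j, Tendsto (fun n => P n i j) atTop (𝓝 0))
    (hQ : ∀ n i j, ‖Q n i j‖ ≤ C)
    (hR : ∀ i j, Tendsto (fun n => R n i j) atTop (𝓝 0)) :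
    Tendsto (fun n => P n * Q n * R n) atTop (𝓝 0) := by
  rw [matTendsto_iff]
  intro i j
  have key : ∀ n, (P n * Q n * R n) i j = ∑ a, ∑ b, P n i a * Q n a b * R n b j := by
    intro n
    simp only [Matrix.mul_apply, Finset.sum_mul]
    rw [Finset.sum_comm]
  simp only [key, Matrix.zero_apply]
  have : Tendsto (fun n => ∑ a, ∑ b, P n i a * Q n a b * R n b j) atTop
      (𝓝 (∑ _a : Fin l, ∑ _b : Fin l, (0 : ℂ))) := by
    apply tendsto_finset_sum; intro a _
    apply tendsto_finset_sum; intro b _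
    rw [tendsto_zero_iff_norm_tendsto_zero]
    have hbnd : Tendsto (fun n => ‖P n i a‖ * C * ‖R n b j‖) atTop (𝓝 0) := by
      have := ((hP i a).norm.mul_const C).mul (hR b j).norm
      simpa using this
    apply squeeze_zero (fun n => norm_nonneg _) _ hbnd
    intro n
    rw [norm_mul, norm_mul]
    have h1 : ‖Q n a b‖ ≤ C := by simpa using hQ n a b
    gcongr
  simpa using this

end aux

/-- Properties of the Weyl–Titchmarsh function `M^φ(z,ω) := −F_1(z,ω) D(ω)⁻¹`:
(a) it is symmetric; (b) `D(ω) Im[M^φ] D(ω) = Im[z] ∑_{k≥1} F_k* F_k`. -/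
theorem weyl_titchmarsh_symmetric_and_im
    {Ω : Type*} [MeasurableSpace Ω] (ν : Measure Ω) [IsProbabilityMeasure ν]
    (T : Equiv.Perm Ω) (hT : Ergodic (⇑T) ν)
    {l : ℕ} (D V : Ω → Matrix (Fin l) (Fin l) ℝ)
    (hDsymm : ∀ ω, (D ω).IsSymm) (hDinv : ∀ ω, IsUnit (D ω))
    (hDbdd : ∃ C : ℝ, ∀ ω i j, |D ω i j| ≤ C)
    (hVsymm : ∀ ω, (V ω).IsSymm)
    (ω : Ω) (z : ℂ) (hz : z.im ≠ 0)
    (F : ℕ → Matrix (Fin l) (Fin l) ℂ)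
    (hF : IsJost (fun n => cx (D ((T ^ n) ω))) (fun n => cx (V ((T ^ n) ω))) z F) :
    ((-(F 1 * (cx (D ω))⁻¹))ᵀ = -(F 1 * (cx (D ω))⁻¹))
    ∧ (cx (D ω) * matIm (-(F 1 * (cx (D ω))⁻¹)) * cx (D ω)
        = (z.im : ℂ) • ∑' k : ℕ, (F (k + 1))ᴴ * F (k + 1)) := by
  obtain ⟨C, hC⟩ := hDbdd
  obtain ⟨hsol, hF0, hsum⟩ := hF
  set Ds : ℕ → Matrix (Fin l) (Fin l) ℂ := fun n => cx (D ((T ^ n) ω)) with hDs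
  set Vs : ℕ → Matrix (Fin l) (Fin l) ℂ := fun n => cx (V ((T ^ n) ω)) with hVs
  set E : Matrix (Fin l) (Fin l) ℂ := cx (D ω) with hE
  have hDs0 : Ds 0 = E := by rw [hDs, hE]; simp
  have hDsT : ∀ n, (Ds n)ᵀ = Ds n := fun n => cx_transp (hDsymm _)
  have hDsH : ∀ n, (Ds n)ᴴ = Ds n := fun n => cx_conjT (hDsymm _)
  have hVsT : ∀ n, (Vs n)ᵀ = Vs n := fun n => cx_transp (hVsymm _)
  have hVsH : ∀ n, (Vs n)ᴴ = Vs n := fun n => cx_conjT (hVsymm _)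
  have hET : Eᵀ = E := cx_transp (hDsymm ω)
  have hEH : Eᴴ = E := cx_conjT (hDsymm ω)
  have hDsbdd : ∀ n a b, ‖Ds n a b‖ ≤ C := by
    intro n a b
    simpa [hDs, cx, Matrix.map_apply] using hC ((T ^ n) ω) a b
  have hEunit : IsUnit E.det := by
    have h := hDinv ω
    rw [Matrix.isUnit_iff_isUnit_det] at h
    have h2 : E.det = Complex.ofRealHom ((D ω).det) := by
      rw [RingHom.map_det]; rfl
    rw [h2]; exact h.map _
  have hEinvmul : E⁻¹ * E = 1 := Matrix.nonsing_inv_mul E hEunit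
  have hEmulinv : E * E⁻¹ = 1 := Matrix.mul_nonsing_inv E hEunit
  -- recurrence in convenient form
  have hrec : ∀ n, Ds (n + 1) * F (n + 2) =
      z • F (n + 1) - Vs (n + 1) * F (n + 1) - Ds n * F n := by
    intro n
    have h := hsol (n + 1) (by omega)
    simp only [Nat.add_sub_cancel] at h
    rw [eq_sub_iff_add_eq, eq_sub_iff_add_eq, ← h]; abel
  -- entries tend to zero
  set t : ℕ → ℝ := fun n => ∑ i, ∑ j, ‖F n i j‖ ^ 2 with htdef
  have ht0 : Tendsto t atTop (𝓝 0) := hsum.tendsto_atTop_zero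
  have hentry : ∀ n (i j : Fin l), ‖F n i j‖ ^ 2 ≤ t n := by
    intro n i j
    simp only [htdef]
    calc ‖F n i j‖ ^ 2
        ≤ ∑ j', ‖F n i j'‖ ^ 2 :=
          Finset.single_le_sum (f := fun j' => ‖F n i j'‖ ^ 2)
            (fun _ _ => sq_nonneg _) (Finset.mem_univ j)
      _ ≤ ∑ i', ∑ j', ‖F n i' j'‖ ^ 2 :=
          Finset.single_le_sum (f := fun i' => ∑ j', ‖F n i' j'‖ ^ 2)
            (fun i' _ => Finset.sum_nonneg fun _ _ => sq_nonneg _) (Finset.mem_univ i)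
  have hcol : ∀ n (i : Fin l), ∑ a, ‖F n a i‖ ^ 2 ≤ t n := by
    intro n i
    simp only [htdef]
    calc ∑ a, ‖F n a i‖ ^ 2
        ≤ ∑ a, ∑ j, ‖F n a j‖ ^ 2 := by
          apply Finset.sum_le_sum; intro a _
          exact Finset.single_le_sum (f := fun j => ‖F n a j‖ ^ 2)
            (fun _ _ => sq_nonneg _) (Finset.mem_univ i)
      _ = ∑ i', ∑ j', ‖F n i' j'‖ ^ 2 := rfl
  have hFt : ∀ i j, Tendsto (fun n => F n i j) atTop (𝓝 0) := by
    intro i j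
    rw [tendsto_zero_iff_norm_tendsto_zero]
    have hsq : Tendsto (fun n => Real.sqrt (t n)) atTop (𝓝 0) := by
      have := (Real.continuous_sqrt.tendsto 0).comp ht0
      rw [Real.sqrt_zero] at this; exact this
    apply squeeze_zero (fun n => norm_nonneg _) _ hsq
    intro n
    exact Real.le_sqrt_of_sq_le (by simpa using hentry n i j)
  have hFt1 : ∀ i j, Tendsto (fun n => F (n + 1) i j) atTop (𝓝 0) :=
    fun i j => (hFt i j).comp (tendsto_add_atTop_nat 1)
  have hFtT : ∀ i j, Tendsto (fun n => (F n)ᵀ i j) atTop (𝓝 0) := by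
    intro i j; simpa [Matrix.transpose_apply] using hFt j i
  have hFtT1 : ∀ i j, Tendsto (fun n => (F (n + 1))ᵀ i j) atTop (𝓝 0) := by
    intro i j; simpa [Matrix.transpose_apply] using hFt1 j i
  have hFtH : ∀ i j, Tendsto (fun n => (F n)ᴴ i j) atTop (𝓝 0) := by
    intro i j
    have := (hFt j i).star
    simpa [Matrix.conjTranspose_apply] using this
  have hFtH1 : ∀ i j, Tendsto (fun n => (F (n + 1))ᴴ i j) atTop (𝓝 0) := by
    intro i j
    have := (hFt1 j i).star
    simpa [Matrix.conjTranspose_apply] using this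
  ---- Part (a)
  set W : ℕ → Matrix (Fin l) (Fin l) ℂ :=
    fun n => (F n)ᵀ * Ds n * F (n + 1) - (F (n + 1))ᵀ * Ds n * F n with hWdef
  have hWstep : ∀ n, W (n + 1) = W n := by
    intro n
    have hX := hrec n
    have hXT : (F (n + 2))ᵀ * Ds (n + 1) =
        z • (F (n + 1))ᵀ - (F (n + 1))ᵀ * Vs (n + 1) - (F n)ᵀ * Ds n := by
      have h := congrArg Matrix.transpose hX
      simpa [Matrix.transpose_mul, Matrix.transpose_smul, Matrix.transpose_sub,
        hDsT, hVsT] using h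
    have e1 : W (n + 1) = (F (n + 1))ᵀ * (Ds (n + 1) * F (n + 2))
        - ((F (n + 2))ᵀ * Ds (n + 1)) * F (n + 1) := by
      simp [hWdef, Matrix.mul_assoc]
    rw [e1, hX, hXT, hWdef]
    simp only [Matrix.mul_sub, Matrix.sub_mul, Matrix.mul_smul, Matrix.smul_mul,
      Matrix.mul_assoc]
    module
  have hWconst : ∀ n, W n = W 0 := by
    intro n; induction n with
    | zero => rfl
    | succ k ih => rw [hWstep k, ih]
  have hWtend : Tendsto W atTop (𝓝 0) := by
    have h1 := tendsto_mul3 hFtT hDsbdd hFt1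
    have h2 := tendsto_mul3 hFtT1 hDsbdd hFt
    have := h1.sub h2
    simpa [hWdef] using this
  have hW0 : W 0 = 0 := by
    have hWc : Tendsto W atTop (𝓝 (W 0)) := by
      have : W = fun _ => W 0 := funext hWconst
      rw [this]; exact tendsto_const_nhds
    exact tendsto_nhds_unique hWc hWtend
  have hsymm : E * F 1 = (F 1)ᵀ * E := by
    have h := hW0
    rw [hWdef] at h
    simp only [hF0, hDs0, Matrix.transpose_one, Matrix.one_mul, Matrix.mul_one] at h
    exact sub_eq_zero.mp h
  have parta : (-(F 1 * E⁻¹))ᵀ = -(F 1 * E⁻¹) := by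
    rw [Matrix.transpose_neg, Matrix.transpose_mul, Matrix.transpose_nonsing_inv, hET]
    have h3 : E⁻¹ * (F 1)ᵀ = F 1 * E⁻¹ := by
      have h4 : (F 1)ᵀ = E * (F 1 * E⁻¹) := by
        rw [← Matrix.mul_assoc, hsymm, Matrix.mul_assoc, hEmulinv, Matrix.mul_one]
      rw [h4, ← Matrix.mul_assoc, hEinvmul, Matrix.one_mul]
    rw [h3]
  ---- Part (b)
  set S : ℕ → Matrix (Fin l) (Fin l) ℂ := fun k => (F (k + 1))ᴴ * F (k + 1) with hSdef
  have hSbnd : ∀ k (i j : Fin l), ‖S k i j‖ ≤ t (k + 1) := by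
    intro k i j
    have hrepr : S k i j = ∑ a, (starRingEnd ℂ) (F (k + 1) a i) * F (k + 1) a j := by
      simp [hSdef, Matrix.mul_apply, Matrix.conjTranspose_apply]
    rw [hrepr]
    calc ‖∑ a, (starRingEnd ℂ) (F (k + 1) a i) * F (k + 1) a j‖
        ≤ ∑ a, ‖(starRingEnd ℂ) (F (k + 1) a i) * F (k + 1) a j‖ := norm_sum_le _ _
      _ ≤ ∑ a, (‖F (k + 1) a i‖ ^ 2 + ‖F (k + 1) a j‖ ^ 2) / 2 := by
          apply Finset.sum_le_sum; intro a _
          rw [norm_mul, RingHomIsometric.norm_map]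
          nlinarith [sq_nonneg (‖F (k + 1) a i‖ - ‖F (k + 1) a j‖),
            norm_nonneg (F (k + 1) a i),
            norm_nonneg (F (k + 1) a j)]
      _ ≤ (t (k + 1) + t (k + 1)) / 2 := by
          rw [← Finset.sum_div, Finset.sum_add_distrib]
          gcongr
          · exact hcol (k + 1) i
          · exact hcol (k + 1) j
      _ = t (k + 1) := by ring
  have hSsum : ∀ i j, Summable fun k => S k i j := fun i j =>
    Summable.of_norm_bounded ((summable_nat_add_iff 1).2 hsum) (fun k => hSbnd k i j)
  set SS : Matrix (Fin l) (Fin l) ℂ := Matrix.of fun i j => ∑' k, S k i j with hSS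
  have hhs : HasSum S SS := matHasSum_iff.2 fun i j => (hSsum i j).hasSum
  have htsumS : ∑' k, S k = SS := hhs.tsum_eq
  have hpartial : Tendsto (fun N => ∑ k ∈ Finset.range N, S k) atTop (𝓝 SS) :=
    hhs.tendsto_sum_nat
  set G : ℕ → Matrix (Fin l) (Fin l) ℂ :=
    fun n => (F n)ᴴ * Ds n * F (n + 1) - (F (n + 1))ᴴ * Ds n * F n with hGdef
  have hGstep : ∀ n, G (n + 1) = G n + (z - (starRingEnd ℂ) z) • S n := by
    intro n
    have hX := hrec n
    have hXH : (F (n + 2))ᴴ * Ds (n + 1) =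
        (starRingEnd ℂ) z • (F (n + 1))ᴴ - (F (n + 1))ᴴ * Vs (n + 1) - (F n)ᴴ * Ds n := by
      have h := congrArg Matrix.conjTranspose hX
      simpa [Matrix.conjTranspose_mul, Matrix.conjTranspose_smul, Matrix.conjTranspose_sub,
        hDsH, hVsH, Complex.star_def] using h
    have e1 : G (n + 1) = (F (n + 1))ᴴ * (Ds (n + 1) * F (n + 2))
        - ((F (n + 2))ᴴ * Ds (n + 1)) * F (n + 1) := by
      simp [hGdef, Matrix.mul_assoc]
    rw [e1, hX, hXH, hGdef, hSdef]
    simp only [Matrix.mul_sub, Matrix.sub_mul, Matrix.mul_smul, Matrix.smul_mul,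
      Matrix.mul_assoc]
    module
  have hGN : ∀ N, G N = G 0 + (z - (starRingEnd ℂ) z) • ∑ k ∈ Finset.range N, S k := by
    intro N; induction N with
    | zero => simp
    | succ k ih =>
        rw [hGstep k, ih, Finset.sum_range_succ, smul_add]
        abel
  have hGtend : Tendsto G atTop (𝓝 0) := by
    have h1 := tendsto_mul3 hFtH hDsbdd hFt1
    have h2 := tendsto_mul3 hFtH1 hDsbdd hFt
    have := h1.sub h2
    simpa [hGdef] using this
  have hGlim : Tendsto G atTop (𝓝 (G 0 + (z - (starRingEnd ℂ) z) • SS)) := by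
    have h := ((hpartial.const_smul (z - (starRingEnd ℂ) z)).const_add (G 0))
    have heq : (fun N => G 0 + (z - (starRingEnd ℂ) z) • ∑ k ∈ Finset.range N, S k) = G :=
      funext fun N => (hGN N).symm
    rwa [heq] at h
  have hkey : G 0 + (z - (starRingEnd ℂ) z) • SS = 0 := tendsto_nhds_unique hGlim hGtend
  have hG0 : G 0 = E * F 1 - (F 1)ᴴ * E := by
    rw [hGdef]
    simp [hF0, hDs0, Matrix.conjTranspose_one]
  have hMH : (-(F 1 * E⁻¹))ᴴ = -(E⁻¹ * (F 1)ᴴ) := by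
    rw [Matrix.conjTranspose_neg, Matrix.conjTranspose_mul, Matrix.conjTranspose_nonsing_inv,
      hEH]
  have partb : E * matIm (-(F 1 * E⁻¹)) * E = (z.im : ℂ) • ∑' k, S k := by
    rw [htsumS]
    calc E * matIm (-(F 1 * E⁻¹)) * E
        = (2 * Complex.I)⁻¹ • (E * ((-(F 1 * E⁻¹)) - (-(E⁻¹ * (F 1)ᴴ))) * E) := by
          rw [matIm, hMH, Matrix.mul_smul, Matrix.smul_mul]
      _ = (2 * Complex.I)⁻¹ • ((F 1)ᴴ * E - E * F 1) := by
          congr 1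
          rw [sub_neg_eq_add, Matrix.mul_add, Matrix.add_mul, Matrix.mul_neg, Matrix.neg_mul]
          have a1 : E * (F 1 * E⁻¹) * E = E * F 1 := by
            rw [← Matrix.mul_assoc, Matrix.mul_assoc (E * F 1), hEinvmul, Matrix.mul_one]
          have a2 : E * (E⁻¹ * (F 1)ᴴ) * E = (F 1)ᴴ * E := by
            rw [← Matrix.mul_assoc, hEmulinv, Matrix.one_mul]
          rw [a1, a2]; abel
      _ = (2 * Complex.I)⁻¹ • (-(G 0)) := by rw [hG0]; congr 1; abel
      _ = (2 * Complex.I)⁻¹ • ((z - (starRingEnd ℂ) z) • SS) := by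
          rw [← eq_neg_of_add_eq_zero_right hkey]
      _ = (z.im : ℂ) • SS := by
          rw [smul_smul]
          congr 1
          rw [Complex.sub_conj]
          have hI := Complex.I_ne_zero
          field_simp
          push_cast
          ring
  exact ⟨parta, partb⟩
end
end

section
/- Let z ∈ ℂ_+, ω ∈ Ω, let (F_n(z,ω))_{n≥0} be the Jost solutions and M^φ(z,ω) the Weyl–Titchmarsh function, and set D_m := D(T^m ω), V_n := V(T^n ω). Then for all m, n ∈ ℤ_+: (a) F_n(z, T^m ω) · F_m(z, ω) = F_{n+m}(z, ω); (b) M^φ(z, T^m ω) = −F_{m+1}(z, ω) · F_m(z, ω)^{−1} · D_m^{−1}; (c) −(M^φ(z, T^{n−1} ω))^{−1} − D_n · M^φ(z, T^n ω) · D_n + V_n = z·I. -/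
open MeasureTheory Matrix Filter Topology Finset

noncomputable section

namespace JostAux
variable {l : ℕ}

def S (A : Matrix (Fin l) (Fin l) ℂ) : ℝ := ∑ i, ∑ j, ‖A i j‖ ^ 2

lemma S_nonneg (A : Matrix (Fin l) (Fin l) ℂ) : 0 ≤ S A := by
  unfold S; positivity

lemma sq_le_S (A : Matrix (Fin l) (Fin l) ℂ) (i j : Fin l) :
    ‖A i j‖ ^ 2 ≤ S A := by
  unfold S
  calc ‖A i j‖ ^ 2 ≤ ∑ j', ‖A i j'‖ ^ 2 :=
        Finset.single_le_sum (f := fun j' => ‖A i j'‖ ^ 2)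
          (fun k _ => by positivity) (Finset.mem_univ j)
    _ ≤ ∑ i', ∑ j', ‖A i' j'‖ ^ 2 :=
        Finset.single_le_sum (f := fun i' => ∑ j', ‖A i' j'‖ ^ 2)
          (fun k _ => by positivity) (Finset.mem_univ i)

lemma abs_le_sqrt_S (A : Matrix (Fin l) (Fin l) ℂ) (i j : Fin l) :
    ‖A i j‖ ≤ Real.sqrt (S A) := by
  have := sq_le_S A i j
  have h2 : ‖A i j‖ = Real.sqrt (‖A i j‖ ^ 2) := by
    rw [Real.sqrt_sq (norm_nonneg _)]
  rw [h2]
  exact Real.sqrt_le_sqrt this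

lemma conj_mul_self (a : ℂ) : (starRingEnd ℂ) a * a = ((‖a‖ ^ 2 : ℝ) : ℂ) := by
  rw [mul_comm, Complex.mul_conj, Complex.sq_norm]

lemma trace_conjT_mul_self (A : Matrix (Fin l) (Fin l) ℂ) :
    Matrix.trace (Aᴴ * A) = (S A : ℂ) := by
  have : Matrix.trace (Aᴴ * A) = ∑ i, ∑ j, (starRingEnd ℂ) (A j i) * A j i := by
    simp [Matrix.trace, Matrix.mul_apply, Matrix.conjTranspose_apply, Matrix.diag]
  rw [this, Finset.sum_comm]
  unfold S
  push_cast
  refine Finset.sum_congr rfl fun i _ => Finset.sum_congr rfl fun j _ => ?_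
  rw [conj_mul_self]; push_cast; ring

lemma cx_isUnit {A : Matrix (Fin l) (Fin l) ℝ} (h : IsUnit A) : IsUnit (cx A) := by
  have : cx A = (RingHom.mapMatrix (Complex.ofRealHom) : Matrix (Fin l) (Fin l) ℝ →+* Matrix (Fin l) (Fin l) ℂ) A := rfl
  rw [this]; exact h.map _

lemma cx_hermitian {A : Matrix (Fin l) (Fin l) ℝ} (h : A.IsSymm) : (cx A).IsHermitian := by
  ext i j
  simp only [Matrix.IsHermitian, Matrix.conjTranspose_apply, cx, Matrix.map_apply,
    Complex.star_def, Complex.conj_ofReal]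
  rw [h.apply]

lemma S_mul_le (A B : Matrix (Fin l) (Fin l) ℂ) :
    S (A * B) ≤ ((∑ p, ∑ q, ‖B p q‖) ^ 2 * l ^ 2) * S A := by
  set c : ℝ := ∑ p, ∑ q, ‖B p q‖ with hc
  have hc0 : 0 ≤ c := by positivity
  have hBc : ∀ p q, ‖B p q‖ ≤ c := by
    intro p q
    calc ‖B p q‖ ≤ ∑ q', ‖B p q'‖ :=
          Finset.single_le_sum (f := fun q' => ‖B p q'‖)
            (fun k _ => norm_nonneg _) (Finset.mem_univ q)
      _ ≤ c := Finset.single_le_sum (f := fun p' => ∑ q', ‖B p' q'‖)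
            (fun k _ => by positivity) (Finset.mem_univ p)
  have key : ∀ i j, ‖(A * B) i j‖ ^ 2 ≤ c ^ 2 * l * ∑ k, ‖A i k‖ ^ 2 := by
    intro i j
    have h1 : ‖(A * B) i j‖ ≤ c * ∑ k, ‖A i k‖ := by
      rw [Matrix.mul_apply]
      calc ‖∑ k, A i k * B k j‖ ≤ ∑ k, ‖A i k * B k j‖ :=
            norm_sum_le _ _
        _ ≤ ∑ k, ‖A i k‖ * c := by
            refine Finset.sum_le_sum fun k _ => ?_
            rw [norm_mul]
            exact mul_le_mul_of_nonneg_left (hBc k j) (norm_nonneg _)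
        _ = c * ∑ k, ‖A i k‖ := by rw [← Finset.sum_mul]; ring
    have h2 : (∑ k, ‖A i k‖) ^ 2 ≤ (l : ℝ) * ∑ k, ‖A i k‖ ^ 2 := by
      simpa using sq_sum_le_card_mul_sum_sq (s := (Finset.univ : Finset (Fin l)))
        (f := fun k => ‖A i k‖)
    calc ‖(A * B) i j‖ ^ 2 ≤ (c * ∑ k, ‖A i k‖) ^ 2 := by
          apply pow_le_pow_left₀ (norm_nonneg _) h1
      _ = c ^ 2 * (∑ k, ‖A i k‖) ^ 2 := by ring
      _ ≤ c ^ 2 * ((l : ℝ) * ∑ k, ‖A i k‖ ^ 2) := by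
          exact mul_le_mul_of_nonneg_left h2 (by positivity)
      _ = c ^ 2 * l * ∑ k, ‖A i k‖ ^ 2 := by ring
  calc S (A * B) ≤ ∑ i : Fin l, ∑ j : Fin l, (c ^ 2 * l * ∑ k, ‖A i k‖ ^ 2) := by
        refine Finset.sum_le_sum fun i _ => Finset.sum_le_sum fun j _ => key i j
    _ = (c ^ 2 * l ^ 2) * S A := by
        simp only [Finset.sum_const, Finset.card_univ, Fintype.card_fin, nsmul_eq_mul, S,
          Finset.mul_sum]
        ring_nf
    _ = ((∑ p, ∑ q, ‖B p q‖) ^ 2 * l ^ 2) * S A := by rw [hc]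


lemma jost_unique {l : ℕ} {Ds Vs : ℕ → Matrix (Fin l) (Fin l) ℂ}
    (hD : ∀ n, (Ds n).IsHermitian) (hV : ∀ n, (Vs n).IsHermitian)
    (hCb : ∃ C : ℝ, ∀ n i j, ‖Ds n i j‖ ≤ C)
    {z : ℂ} (hz : 0 < z.im)
    {F G : ℕ → Matrix (Fin l) (Fin l) ℂ}
    (hF : IsJost Ds Vs z F) (hG : IsJost Ds Vs z G) : F = G := by
  obtain ⟨C, hC⟩ := hCb
  set W : ℕ → Matrix (Fin l) (Fin l) ℂ := fun n => F n - G n with hWdef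
  have hW0 : W 0 = 0 := by simp [hWdef, hF.2.1, hG.2.1]
  have hWsol : ∀ n : ℕ, 1 ≤ n →
      Ds (n - 1) * W (n - 1) + Ds n * W (n + 1) + Vs n * W n = z • W n := by
    intro n hn
    have h1 := hF.1 n hn
    have h2 := hG.1 n hn
    simp only [hWdef, Matrix.mul_sub, smul_sub]
    rw [← h1, ← h2]
    abel
  set s : ℕ → ℝ := fun n => S (W n) with hsdef
  have hs0 : ∀ n, 0 ≤ s n := fun n => S_nonneg _
  have hssum : Summable s := by
    refine Summable.of_nonneg_of_le hs0 (fun n => ?_)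
      (((hF.2.2).add hG.2.2).mul_left 2)
    have hterm : ∀ i j : Fin l, ‖W n i j‖ ^ 2 ≤
        2 * (‖F n i j‖ ^ 2 + ‖G n i j‖ ^ 2) := by
      intro i j
      have htri : ‖W n i j‖ ≤ ‖F n i j‖ + ‖G n i j‖ := by
        simpa [hWdef, sub_eq_add_neg] using norm_add_le (F n i j) (-(G n i j))
      nlinarith [htri, sq_nonneg (‖F n i j‖ - ‖G n i j‖),
        norm_nonneg (W n i j), norm_nonneg (F n i j),
        norm_nonneg (G n i j)]
    calc s n ≤ ∑ i, ∑ j, 2 * (‖F n i j‖ ^ 2 + ‖G n i j‖ ^ 2) := by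
          exact Finset.sum_le_sum fun i _ => Finset.sum_le_sum fun j _ => hterm i j
      _ = 2 * ((∑ i, ∑ j, ‖F n i j‖ ^ 2) + ∑ i, ∑ j, ‖G n i j‖ ^ 2) := by
          simp only [mul_add, Finset.sum_add_distrib, Finset.mul_sum]
  set b : ℕ → ℂ := fun n => Matrix.trace ((W n)ᴴ * (Ds n * W (n + 1))) with hbdef
  have hb0 : b 0 = 0 := by simp [hbdef, hW0]
  have key : ∀ n : ℕ, 1 ≤ n → (b n).im = (b (n - 1)).im + z.im * s n := by
    intro n hn
    have hn1 : n - 1 + 1 = n := Nat.succ_pred_eq_of_pos hn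
    have h := congrArg (fun X => Matrix.trace ((W n)ᴴ * X)) (hWsol n hn)
    simp only [Matrix.mul_add, Matrix.trace_add] at h
    have e1 : Matrix.trace ((W n)ᴴ * (Ds (n - 1) * W (n - 1))) = star (b (n - 1)) := by
      rw [hbdef]
      simp only [hn1]
      rw [← Matrix.trace_conjTranspose, Matrix.conjTranspose_mul, Matrix.conjTranspose_mul,
        Matrix.conjTranspose_conjTranspose, (hD (n - 1)).eq, Matrix.mul_assoc]
    have e2 : (Matrix.trace ((W n)ᴴ * (Vs n * W n))).im = 0 := by
      have hXh : ((W n)ᴴ * (Vs n * W n))ᴴ = (W n)ᴴ * (Vs n * W n) := by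
        rw [Matrix.conjTranspose_mul, Matrix.conjTranspose_mul,
          Matrix.conjTranspose_conjTranspose, (hV n).eq, Matrix.mul_assoc]
      have hself : star (Matrix.trace ((W n)ᴴ * (Vs n * W n)))
          = Matrix.trace ((W n)ᴴ * (Vs n * W n)) := by
        rw [← Matrix.trace_conjTranspose, hXh]
      exact Complex.conj_eq_iff_im.mp hself
    have e3 : Matrix.trace ((W n)ᴴ * (z • W n)) = z * (s n : ℂ) := by
      rw [Matrix.mul_smul, Matrix.trace_smul, smul_eq_mul, trace_conjT_mul_self]
    rw [e1, e3] at h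
    have h' := congrArg Complex.im h
    simp only [Complex.add_im, Complex.conj_im] at h'
    rw [e2] at h'
    have him : (star (b (n - 1))).im = -(b (n - 1)).im := Complex.conj_im _
    have hzs : (z * (s n : ℂ)).im = z.im * s n := by
      simp [Complex.mul_im]
    rw [him] at h'
    rw [hzs] at h'
    have hbn : (Matrix.trace ((W n)ᴴ * (Ds n * W (n + 1)))).im = (b n).im := by rw [hbdef]
    rw [hbn] at h'
    linarith
  have tel : ∀ N : ℕ, z.im * ∑ n ∈ Finset.Icc 1 N, s n = (b N).im := by
    intro N
    induction N with
    | zero => simp [hb0]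
    | succ N ih =>
      rw [Finset.sum_Icc_succ_top (by omega : 1 ≤ N + 1), mul_add, ih,
        key (N + 1) (by omega)]
      simp
  -- b N → 0
  have hstend : Tendsto s atTop (𝓝 0) := hssum.tendsto_atTop_zero
  have hsq : Tendsto (fun N => Real.sqrt (s N)) atTop (𝓝 0) := by
    have := (Real.continuous_sqrt.tendsto 0).comp hstend
    simpa [Function.comp_def] using this
  have hsq1 : Tendsto (fun N => Real.sqrt (s (N + 1))) atTop (𝓝 0) :=
    hsq.comp (tendsto_add_atTop_nat 1)
  have hbabs : ∀ N : ℕ, ‖b N‖ ≤ (l : ℝ) ^ 3 * C * (Real.sqrt (s N) * Real.sqrt (s (N + 1))) := by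
    intro N
    have hexp : b N = ∑ i, ∑ j, ∑ k,
        (starRingEnd ℂ) (W N j i) * (Ds N j k * W (N + 1) k i) := by
      rw [hbdef]
      simp only [Matrix.trace, Matrix.diag, Matrix.mul_apply, Matrix.conjTranspose_apply,
        Complex.star_def, Finset.mul_sum, Finset.sum_mul]
    rw [hexp]
    have hC0 : ∀ (j k : Fin l), 0 ≤ C := fun j k => le_trans (norm_nonneg _) (hC N j k)
    calc ‖∑ i, ∑ j, ∑ k, (starRingEnd ℂ) (W N j i) * (Ds N j k * W (N + 1) k i)‖
        ≤ ∑ i : Fin l, ∑ j : Fin l, ∑ k : Fin l,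
            (Real.sqrt (s N) * (C * Real.sqrt (s (N + 1)))) := by
          refine le_trans (norm_sum_le _ _) (Finset.sum_le_sum fun i _ => ?_)
          refine le_trans (norm_sum_le _ _) (Finset.sum_le_sum fun j _ => ?_)
          refine le_trans (norm_sum_le _ _) (Finset.sum_le_sum fun k _ => ?_)
          rw [norm_mul, norm_mul, Complex.norm_conj]
          have b1 : ‖W N j i‖ ≤ Real.sqrt (s N) := abs_le_sqrt_S (W N) j i
          have b2 : ‖Ds N j k‖ ≤ C := hC N j k
          have b3 : ‖W (N + 1) k i‖ ≤ Real.sqrt (s (N + 1)) :=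
            abs_le_sqrt_S (W (N + 1)) k i
          gcongr
          all_goals first
            | exact Real.sqrt_nonneg _
            | exact hC0 j k
            | exact b1
            | exact b2
            | exact b3
      _ = (l : ℝ) ^ 3 * C * (Real.sqrt (s N) * Real.sqrt (s (N + 1))) := by
          simp [Finset.sum_const, Finset.card_univ]
          ring
  have hbound : Tendsto (fun N => (l : ℝ) ^ 3 * C * (Real.sqrt (s N) * Real.sqrt (s (N + 1))))
      atTop (𝓝 0) := by
    have h := hsq.mul hsq1
    have := h.const_mul ((l : ℝ) ^ 3 * C)
    simpa using this
  have hbtend : Tendsto b atTop (𝓝 0) := squeeze_zero_norm hbabs hbound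
  have himtend : Tendsto (fun N => (b N).im) atTop (𝓝 0) := by
    have := (Complex.continuous_im.tendsto 0).comp hbtend
    simpa [Function.comp_def] using this
  have hWzero : ∀ n, W n = 0 := by
    intro n
    rcases Nat.eq_zero_or_pos n with h0 | h1
    · rw [h0]; exact hW0
    · have hsn : s n = 0 := by
        have hle : z.im * s n ≤ 0 := by
          refine ge_of_tendsto himtend ?_
          filter_upwards [eventually_ge_atTop n] with N hN
          rw [← tel N]
          have hmem : n ∈ Finset.Icc 1 N := Finset.mem_Icc.mpr ⟨h1, hN⟩
          have hle2 : s n ≤ ∑ k ∈ Finset.Icc 1 N, s k :=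
            Finset.single_le_sum (fun k _ => hs0 k) hmem
          nlinarith
        nlinarith [hs0 n]
      ext i j
      have h2 : ‖W n i j‖ ^ 2 ≤ s n := sq_le_S (W n) i j
      have habs : ‖W n i j‖ = 0 := by
        nlinarith [norm_nonneg (W n i j)]
      simpa using norm_eq_zero.mp habs
  funext n
  exact sub_eq_zero.mp (hWzero n)

end JostAux

set_option maxHeartbeats 1200000 in
/-- Relations between the Jost solutions along the orbit of `T` and the shifted
Weyl–Titchmarsh functions `M^φ(z, T^m ω) = −F_1(z, T^m ω) D(T^m ω)⁻¹`. -/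
theorem jost_shift_relations
    {Ω : Type*} [MeasurableSpace Ω] (ν : Measure Ω) [IsProbabilityMeasure ν]
    (T : Equiv.Perm Ω) (hT : Ergodic (⇑T) ν)
    {l : ℕ} (D V : Ω → Matrix (Fin l) (Fin l) ℝ)
    (hDsymm : ∀ ω, (D ω).IsSymm) (hDinv : ∀ ω, IsUnit (D ω))
    (hDbdd : ∃ C : ℝ, ∀ ω i j, |D ω i j| ≤ C)
    (hVsymm : ∀ ω, (V ω).IsSymm)
    (z : ℂ) (hz : 0 < z.im)
    (F : Ω → ℕ → Matrix (Fin l) (Fin l) ℂ)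
    (hF : ∀ ω : Ω,
      IsJost (fun n => cx (D ((T ^ n) ω))) (fun n => cx (V ((T ^ n) ω))) z (F ω))
    (hFinv : ∀ (ω : Ω) (n : ℕ), IsUnit (F ω n))
    (M : Ω → Matrix (Fin l) (Fin l) ℂ)
    (hM : ∀ ω : Ω, M ω = -(F ω 1 * (cx (D ω))⁻¹))
    (ω : Ω) :
    (∀ n m : ℕ, F ((T ^ m) ω) n * F ω m = F ω (n + m))
    ∧ (∀ m : ℕ, M ((T ^ m) ω) = -(F ω (m + 1) * (F ω m)⁻¹ * (cx (D ((T ^ m) ω)))⁻¹))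
    ∧ (∀ n : ℕ, 1 ≤ n →
        -(M ((T ^ (n - 1)) ω))⁻¹
          - cx (D ((T ^ n) ω)) * M ((T ^ n) ω) * cx (D ((T ^ n) ω))
          + cx (V ((T ^ n) ω))
        = z • (1 : Matrix (Fin l) (Fin l) ℂ)) := by
  obtain ⟨C, hC⟩ := hDbdd
  have horb : ∀ a b : ℕ, (T ^ a) ((T ^ b) ω) = (T ^ (a + b)) ω := by
    intro a b; rw [pow_add]; rfl
  have hdetF : ∀ (σ : Ω) (n : ℕ), IsUnit (F σ n).det :=
    fun σ n => (Matrix.isUnit_iff_isUnit_det _).mp (hFinv σ n)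
  have hdetD : ∀ σ : Ω, IsUnit (cx (D σ)).det :=
    fun σ => (Matrix.isUnit_iff_isUnit_det _).mp (JostAux.cx_isUnit (hDinv σ))
  have hDherm : ∀ σ : Ω, (cx (D σ)).IsHermitian := fun σ => JostAux.cx_hermitian (hDsymm σ)
  have hVherm : ∀ σ : Ω, (cx (V σ)).IsHermitian := fun σ => JostAux.cx_hermitian (hVsymm σ)
  have hcxabs : ∀ (σ : Ω) (i j : Fin l), ‖cx (D σ) i j‖ ≤ C := by
    intro σ i j
    simpa [cx, Matrix.map_apply, Complex.norm_real] using hC σ i j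
  have parta : ∀ m n : ℕ, F ((T ^ m) ω) n * F ω m = F ω (n + m) := by
    intro m
    have hGjost : IsJost (fun k => cx (D ((T ^ k) ((T ^ m) ω))))
        (fun k => cx (V ((T ^ k) ((T ^ m) ω)))) z
        (fun k => F ω (k + m) * (F ω m)⁻¹) := by
      refine ⟨?_, ?_, ?_⟩
      · intro n hn
        have h := (hF ω).1 (n + m) (by omega)
        simp only [] at h
        have h' := congrArg (fun X => X * (F ω m)⁻¹) h
        simp only [Matrix.add_mul, Matrix.mul_assoc, smul_mul_assoc] at h'
        rw [show n + m - 1 = n - 1 + m from by omega,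
          show n + m + 1 = n + 1 + m from by omega] at h'
        simp only [horb]
        exact h'
      · simp only [Nat.zero_add]
        exact Matrix.mul_nonsing_inv _ (hdetF ω m)
      · have hsum0 : Summable (fun n : ℕ => JostAux.S (F ω n)) := by
          have h0 := (hF ω).2.2
          simpa only [JostAux.S] using h0
        have hsum : Summable (fun k : ℕ => JostAux.S (F ω (k + m))) :=
          (summable_nat_add_iff (f := fun n : ℕ => JostAux.S (F ω n)) m).mpr hsum0
        have target : Summable (fun k : ℕ => JostAux.S (F ω (k + m) * (F ω m)⁻¹)) := by
          refine Summable.of_nonneg_of_le (fun k => JostAux.S_nonneg _) (fun k => ?_)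
            (hsum.mul_left ((∑ p, ∑ q, ‖(F ω m)⁻¹ p q‖) ^ 2 * (l : ℝ) ^ 2))
          exact JostAux.S_mul_le _ _
        simpa only [JostAux.S] using target
    have huniq : F ((T ^ m) ω) = fun k => F ω (k + m) * (F ω m)⁻¹ :=
      JostAux.jost_unique (fun k => hDherm _) (fun k => hVherm _)
        ⟨C, fun k i j => hcxabs _ i j⟩ hz (hF ((T ^ m) ω)) hGjost
    intro n
    rw [huniq]
    exact Matrix.nonsing_inv_mul_cancel_right _ _ (hdetF ω m)
  have partb : ∀ m : ℕ, M ((T ^ m) ω) =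
      -(F ω (m + 1) * (F ω m)⁻¹ * (cx (D ((T ^ m) ω)))⁻¹) := by
    intro m
    rw [hM ((T ^ m) ω)]
    have h1 : F ((T ^ m) ω) 1 = F ω (m + 1) * (F ω m)⁻¹ := by
      calc F ((T ^ m) ω) 1
          = F ((T ^ m) ω) 1 * F ω m * (F ω m)⁻¹ :=
            (Matrix.mul_nonsing_inv_cancel_right _ _ (hdetF ω m)).symm
        _ = F ω (1 + m) * (F ω m)⁻¹ := by rw [parta m 1]
        _ = F ω (m + 1) * (F ω m)⁻¹ := by rw [Nat.add_comm]
    rw [h1]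
  refine ⟨fun n m => parta m n, partb, ?_⟩
  intro n hn
  have hn1 : n - 1 + 1 = n := Nat.succ_pred_eq_of_pos hn
  have hM1 : M ((T ^ (n - 1)) ω) =
      -(F ω n * (F ω (n - 1))⁻¹ * (cx (D ((T ^ (n - 1)) ω)))⁻¹) := by
    have h := partb (n - 1)
    rwa [hn1] at h
  have hMinv : (M ((T ^ (n - 1)) ω))⁻¹ =
      -(cx (D ((T ^ (n - 1)) ω)) * (F ω (n - 1) * (F ω n)⁻¹)) := by
    apply Matrix.inv_eq_right_inv
    rw [hM1, neg_mul_neg]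
    calc F ω n * (F ω (n - 1))⁻¹ * (cx (D ((T ^ (n - 1)) ω)))⁻¹ *
          (cx (D ((T ^ (n - 1)) ω)) * (F ω (n - 1) * (F ω n)⁻¹))
        = F ω n * (F ω (n - 1))⁻¹ * (cx (D ((T ^ (n - 1)) ω)))⁻¹ *
          cx (D ((T ^ (n - 1)) ω)) * (F ω (n - 1) * (F ω n)⁻¹) := by
          simp only [Matrix.mul_assoc]
      _ = F ω n * (F ω (n - 1))⁻¹ * (F ω (n - 1) * (F ω n)⁻¹) := by
          rw [Matrix.nonsing_inv_mul_cancel_right _ _ (hdetD _)]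
      _ = F ω n * (F ω (n - 1))⁻¹ * F ω (n - 1) * (F ω n)⁻¹ := by
          simp only [Matrix.mul_assoc]
      _ = F ω n * (F ω n)⁻¹ := by
          rw [Matrix.nonsing_inv_mul_cancel_right _ _ (hdetF ω (n - 1))]
      _ = 1 := Matrix.mul_nonsing_inv _ (hdetF ω n)
  have hMn : cx (D ((T ^ n) ω)) * M ((T ^ n) ω) * cx (D ((T ^ n) ω))
      = -(cx (D ((T ^ n) ω)) * (F ω (n + 1) * (F ω n)⁻¹)) := by
    rw [partb n, Matrix.mul_neg, Matrix.neg_mul]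
    congr 1
    calc cx (D ((T ^ n) ω)) * (F ω (n + 1) * (F ω n)⁻¹ * (cx (D ((T ^ n) ω)))⁻¹) *
          cx (D ((T ^ n) ω))
        = cx (D ((T ^ n) ω)) * (F ω (n + 1) * (F ω n)⁻¹ * (cx (D ((T ^ n) ω)))⁻¹ *
          cx (D ((T ^ n) ω))) := by simp only [Matrix.mul_assoc]
      _ = cx (D ((T ^ n) ω)) * (F ω (n + 1) * (F ω n)⁻¹) := by
          rw [Matrix.nonsing_inv_mul_cancel_right _ _ (hdetD _)]
  rw [hMinv, hMn, neg_neg, sub_neg_eq_add]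
  have h := (hF ω).1 n hn
  simp only [] at h
  have h' := congrArg (fun X => X * (F ω n)⁻¹) h
  simp only [Matrix.add_mul, Matrix.mul_assoc, smul_mul_assoc] at h'
  rw [Matrix.mul_nonsing_inv _ (hdetF ω n), Matrix.mul_one] at h'
  exact h'
end
end

section
/- Let ω ∈ Ω, x ∈ ℝ, y > 0 and k ∈ {1,…,l}. Let f^{(k)}(x+iy) denote the k-th column of the Jost solution F(x+iy, ω), and suppose there exists a solution f^{(k)}(x) of the eigenvalue equation at x with the same initial value f^{(k)}_0(x) = f^{(k)}_0(x+iy) = e_k which is square-summable at +∞. Then ∑_{m=1}^{∞} ‖f^{(k)}_m(x+iy)‖²_{ℂ^l} ≤ ∑_{m=1}^{∞} ‖f^{(k)}_m(x)‖²_{ℂ^l}. -/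
open MeasureTheory Matrix Filter Topology Finset

noncomputable section

/-- `u` is a (vector) solution of the eigenvalue equation on `ℤ_+`. -/
def IsVecSol {l : ℕ} (Ds Vs : ℕ → Matrix (Fin l) (Fin l) ℂ) (z : ℂ)
    (u : ℕ → Fin l → ℂ) : Prop :=
  ∀ n : ℕ, 1 ≤ n → Ds (n - 1) *ᵥ u (n - 1) + Ds n *ᵥ u (n + 1) + Vs n *ᵥ u n = z • u n

section AuxJost

variable {l : ℕ}

/-- Wronskian-type quantity. -/
def Wr (Ds : ℕ → Matrix (Fin l) (Fin l) ℂ) (u v : ℕ → Fin l → ℂ) (n : ℕ) : ℂ :=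
  star (u n) ⬝ᵥ (Ds n *ᵥ v (n + 1)) - star (u (n + 1)) ⬝ᵥ (Ds n *ᵥ v n)

lemma star_mulVec_dot {A : Matrix (Fin l) (Fin l) ℂ} (hA : Aᴴ = A) (a b : Fin l → ℂ) :
    star (A *ᵥ a) ⬝ᵥ b = star a ⬝ᵥ (A *ᵥ b) := by
  rw [star_mulVec, hA, ← dotProduct_mulVec]

lemma conj_dot {A : Matrix (Fin l) (Fin l) ℂ} (hA : Aᴴ = A) (e w : Fin l → ℂ) :
    starRingEnd ℂ (star e ⬝ᵥ (A *ᵥ w)) = star w ⬝ᵥ (A *ᵥ e) := by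
  have h1 : starRingEnd ℂ (star e ⬝ᵥ (A *ᵥ w)) = star (star e ⬝ᵥ (A *ᵥ w)) := rfl
  rw [h1, ← star_dotProduct_star, star_star, star_mulVec_dot hA]

lemma green {Ds Vs : ℕ → Matrix (Fin l) (Fin l) ℂ}
    (hD : ∀ n, (Ds n)ᴴ = Ds n) (hV : ∀ n, (Vs n)ᴴ = Vs n)
    {w z : ℂ} {u v : ℕ → Fin l → ℂ}
    (hu : IsVecSol Ds Vs w u) (hv : IsVecSol Ds Vs z v) (n : ℕ) :
    Wr Ds u v (n + 1) - Wr Ds u v n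
      = (z - star w) * (star (u (n + 1)) ⬝ᵥ v (n + 1)) := by
  have hu1 := hu (n + 1) (Nat.le_add_left 1 n)
  have hv1 := hv (n + 1) (Nat.le_add_left 1 n)
  simp only [Nat.add_sub_cancel] at hu1 hv1
  have e1 := congrArg (fun t => star t ⬝ᵥ v (n + 1)) hu1
  have e2 := congrArg (fun t => star (u (n + 1)) ⬝ᵥ t) hv1
  simp only [star_add, add_dotProduct, star_smul, smul_dotProduct, smul_eq_mul,
    dotProduct_add, dotProduct_smul] at e1 e2
  rw [star_mulVec_dot (hD n), star_mulVec_dot (hD (n + 1)), star_mulVec_dot (hV (n + 1))] at e1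
  unfold Wr
  linear_combination e2 - e1

lemma wr_eq {Ds Vs : ℕ → Matrix (Fin l) (Fin l) ℂ}
    (hD : ∀ n, (Ds n)ᴴ = Ds n) (hV : ∀ n, (Vs n)ᴴ = Vs n)
    {w z : ℂ} {u v : ℕ → Fin l → ℂ}
    (hu : IsVecSol Ds Vs w u) (hv : IsVecSol Ds Vs z v) (N : ℕ) :
    Wr Ds u v N = Wr Ds u v 0
      + (z - star w) * ∑ n ∈ Finset.range N, star (u (n + 1)) ⬝ᵥ v (n + 1) := by
  induction N with
  | zero => simp
  | succ N ih =>
      rw [Finset.sum_range_succ]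
      have h := green hD hV hu hv N
      linear_combination ih + h

lemma comp_tendsto_zero {u : ℕ → Fin l → ℂ}
    (h : Summable fun n => ∑ i, ‖u n i‖ ^ 2) (i : Fin l) :
    Tendsto (fun n => ‖u n i‖) atTop (𝓝 0) := by
  have h0 : Tendsto (fun n => ∑ i, ‖u n i‖ ^ 2) atTop (𝓝 0) :=
    h.tendsto_atTop_zero
  have hs : Tendsto (fun n => Real.sqrt (∑ i, ‖u n i‖ ^ 2)) atTop (𝓝 0) := by
    simpa [Function.comp_def] using (Real.continuous_sqrt.tendsto 0).comp h0
  refine squeeze_zero (fun n => norm_nonneg _) (fun n => ?_) hs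
  have h1 : ‖u n i‖ ^ 2 ≤ ∑ j, ‖u n j‖ ^ 2 := by
    exact Finset.single_le_sum (f := fun j => ‖u n j‖ ^ 2)
      (fun j _ => by positivity) (Finset.mem_univ i)
  calc ‖u n i‖ = Real.sqrt (‖u n i‖ ^ 2) := (Real.sqrt_sq (norm_nonneg _)).symm
    _ ≤ _ := Real.sqrt_le_sqrt h1

lemma dot_tendsto_zero {Ds : ℕ → Matrix (Fin l) (Fin l) ℂ} {C : ℝ}
    (hC : ∀ n i j, ‖Ds n i j‖ ≤ C) {a b : ℕ → Fin l → ℂ}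
    (ha : ∀ i, Tendsto (fun n => ‖a n i‖) atTop (𝓝 0))
    (hb : ∀ j, Tendsto (fun n => ‖b n j‖) atTop (𝓝 0)) :
    Tendsto (fun n => star (a n) ⬝ᵥ (Ds n *ᵥ b n)) atTop (𝓝 0) := by
  have hrw : ∀ n, star (a n) ⬝ᵥ (Ds n *ᵥ b n)
      = ∑ i, ∑ j, star (a n i) * Ds n i j * b n j := by
    intro n
    simp [dotProduct, Matrix.mulVec, Finset.mul_sum, mul_assoc]
  have hmain : Tendsto (fun n => ∑ i, ∑ j, star (a n i) * Ds n i j * b n j)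
      atTop (𝓝 (∑ i : Fin l, ∑ j : Fin l, (0 : ℂ))) := by
    refine tendsto_finset_sum _ fun i _ => tendsto_finset_sum _ fun j _ => ?_
    have hbnd : ∀ n, ‖star (a n i) * Ds n i j * b n j‖ ≤ ‖a n i‖ * C * ‖b n j‖ := by
      intro n
      have hd : ‖Ds n i j‖ ≤ C := by exact hC n i j
      calc ‖star (a n i) * Ds n i j * b n j‖
          = ‖a n i‖ * ‖Ds n i j‖ * ‖b n j‖ := by simp [norm_mul]
        _ ≤ ‖a n i‖ * C * ‖b n j‖ :=
            mul_le_mul_of_nonneg_right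
              (mul_le_mul_of_nonneg_left hd (norm_nonneg _)) (norm_nonneg _)
    have hten : Tendsto (fun n => ‖a n i‖ * C * ‖b n j‖) atTop (𝓝 0) := by
      have := ((ha i).mul_const C).mul (hb j)
      simpa using this
    exact squeeze_zero_norm hbnd hten
  have := hmain.congr fun n => (hrw n).symm
  simpa using this

lemma summable_bb {u v : ℕ → Fin l → ℂ}
    (hus : Summable fun n => ∑ i, ‖u n i‖ ^ 2)
    (hvs : Summable fun n => ∑ i, ‖v n i‖ ^ 2) :
    Summable fun n : ℕ => star (u (n + 1)) ⬝ᵥ v (n + 1) := by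
  have hsum : Summable fun n : ℕ =>
      (∑ i, ‖u (n + 1) i‖ ^ 2 + ∑ i, ‖v (n + 1) i‖ ^ 2) / 2 :=
    (((summable_nat_add_iff 1).2 hus).add ((summable_nat_add_iff 1).2 hvs)).div_const 2
  refine Summable.of_norm_bounded hsum fun n => ?_
  calc ‖star (u (n + 1)) ⬝ᵥ v (n + 1)‖
      ≤ ∑ i, ‖u (n + 1) i‖ * ‖v (n + 1) i‖ := by
        rw [dotProduct]
        refine (norm_sum_le _ _).trans (Finset.sum_le_sum fun i _ => ?_)
        rw [Pi.star_apply, norm_mul, norm_star]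
    _ ≤ ∑ i, (‖u (n + 1) i‖ ^ 2 + ‖v (n + 1) i‖ ^ 2) / 2 :=
        Finset.sum_le_sum fun i _ => by
          nlinarith [sq_nonneg (‖u (n + 1) i‖ - ‖v (n + 1) i‖)]
    _ = (∑ i, ‖u (n + 1) i‖ ^ 2 + ∑ i, ‖v (n + 1) i‖ ^ 2) / 2 := by
        rw [← Finset.sum_div, Finset.sum_add_distrib]

lemma wr_tendsto_zero {Ds : ℕ → Matrix (Fin l) (Fin l) ℂ} {C : ℝ}
    (hC : ∀ n i j, ‖Ds n i j‖ ≤ C) {u v : ℕ → Fin l → ℂ}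
    (hus : Summable fun n => ∑ i, ‖u n i‖ ^ 2)
    (hvs : Summable fun n => ∑ i, ‖v n i‖ ^ 2) :
    Tendsto (Wr Ds u v) atTop (𝓝 0) := by
  have h1 := dot_tendsto_zero hC (a := u) (b := fun n => v (n + 1))
    (fun i => comp_tendsto_zero hus i)
    (fun j => (comp_tendsto_zero hvs j).comp (tendsto_add_atTop_nat 1))
  have h2 := dot_tendsto_zero hC (a := fun n => u (n + 1)) (b := v)
    (fun i => (comp_tendsto_zero hus i).comp (tendsto_add_atTop_nat 1))
    (fun j => comp_tendsto_zero hvs j)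
  have h3 := h1.sub h2; rw [sub_zero] at h3; exact h3

lemma wr_zero {Ds Vs : ℕ → Matrix (Fin l) (Fin l) ℂ}
    (hD : ∀ n, (Ds n)ᴴ = Ds n) (hV : ∀ n, (Vs n)ᴴ = Vs n)
    {C : ℝ} (hC : ∀ n i j, ‖Ds n i j‖ ≤ C)
    {w z : ℂ} {u v : ℕ → Fin l → ℂ}
    (hu : IsVecSol Ds Vs w u) (hv : IsVecSol Ds Vs z v)
    (hus : Summable fun n => ∑ i, ‖u n i‖ ^ 2)
    (hvs : Summable fun n => ∑ i, ‖v n i‖ ^ 2) :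
    Wr Ds u v 0 = -((z - star w) * ∑' n : ℕ, star (u (n + 1)) ⬝ᵥ v (n + 1)) := by
  have hb : Summable fun n : ℕ => star (u (n + 1)) ⬝ᵥ v (n + 1) := summable_bb hus hvs
  have h1 : Tendsto (fun N => Wr Ds u v 0 + (z - star w) * ∑ n ∈ Finset.range N,
      star (u (n + 1)) ⬝ᵥ v (n + 1)) atTop
      (𝓝 (Wr Ds u v 0 + (z - star w) * ∑' n : ℕ, star (u (n + 1)) ⬝ᵥ v (n + 1))) :=
    tendsto_const_nhds.add (hb.hasSum.tendsto_sum_nat.const_mul _)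
  have h2 := h1.congr fun N => (wr_eq hD hV hu hv N).symm
  have h0 := wr_tendsto_zero hC hus hvs
  have := tendsto_nhds_unique h2 h0
  linear_combination this

lemma le_of_t_bound {A B : ℝ} (hA : 0 ≤ A) (hB : 0 ≤ B)
    (h : ∀ t : ℝ, 0 < t → A ≤ (t * B + t⁻¹ * A) / 2) : A ≤ B := by
  rcases le_or_gt A B with h' | h'
  · exact h'
  exfalso
  have hA0 : 0 < A := hB.trans_lt h'
  rcases eq_or_lt_of_le hB with hB0 | hB0
  · have h4 := h 4 (by norm_num)
    rw [← hB0] at h4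
    norm_num at h4
    linarith
  · have ht := h (A / B) (div_pos hA0 hB0)
    have e1 : A / B * B = A := div_mul_cancel₀ _ (ne_of_gt hB0)
    have e2 : (A / B)⁻¹ * A = B := by
      rw [inv_div]
      exact div_mul_cancel₀ _ (ne_of_gt hA0)
    rw [e1, e2] at ht
    linarith

end AuxJost

section MainAux

set_option maxHeartbeats 1000000 in
lemma main_aux {l : ℕ} {Ds Vs : ℕ → Matrix (Fin l) (Fin l) ℂ}
    (hDh : ∀ n, (Ds n)ᴴ = Ds n) (hVh : ∀ n, (Vs n)ᴴ = Vs n)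
    {C : ℝ} (hC : ∀ n i j, ‖Ds n i j‖ ≤ C)
    {x y : ℝ} (hy : 0 < y) (k : Fin l)
    {F : ℕ → Matrix (Fin l) (Fin l) ℂ}
    (hF : IsJost Ds Vs ((x : ℂ) + (y : ℂ) * Complex.I) F)
    {g : ℕ → Fin l → ℂ}
    (hg : IsVecSol Ds Vs (x : ℂ) g)
    (hg0 : g 0 = fun i => if i = k then 1 else 0)
    (hgsum : Summable fun n : ℕ => ∑ i, ‖g n i‖ ^ 2) :
    ∑' m : ℕ, ∑ i, ‖F (m + 1) i k‖ ^ 2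
      ≤ ∑' m : ℕ, ∑ i, ‖g (m + 1) i‖ ^ 2 := by
  obtain ⟨hMat, hF0, hFsq⟩ := hF
  set z : ℂ := (x : ℂ) + (y : ℂ) * Complex.I with hz
  set f : ℕ → Fin l → ℂ := fun n i => F n i k with hf
  suffices hfin : ∑' m : ℕ, ∑ i, ‖f (m + 1) i‖ ^ 2
      ≤ ∑' m : ℕ, ∑ i, ‖g (m + 1) i‖ ^ 2 by
    simpa [hf] using hfin
  -- the column is a vector solution
  have hfvec : IsVecSol Ds Vs z f := by
    intro n hn
    have h := hMat n hn
    funext i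
    have h2 := congrFun (congrFun h i) k
    simpa [hf, Matrix.mul_apply, Matrix.mulVec, dotProduct, Matrix.add_apply,
      Matrix.smul_apply, smul_eq_mul] using h2
  have hfsum : Summable fun n => ∑ i, ‖f n i‖ ^ 2 := by
    simp only [hf]
    refine Summable.of_nonneg_of_le (fun n => by positivity) (fun n => ?_) hFsq
    refine Finset.sum_le_sum fun i _ => ?_
    exact Finset.single_le_sum (f := fun j => ‖F n i j‖ ^ 2)
      (fun j _ => by positivity) (Finset.mem_univ k)
  have hFn : Summable fun n : ℕ => ∑ i, ‖f (n + 1) i‖ ^ 2 :=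
    ((summable_nat_add_iff (f := fun n => ∑ i, ‖f n i‖ ^ 2) 1).2 hfsum :)
  have hGn : Summable fun n : ℕ => ∑ i, ‖g (n + 1) i‖ ^ 2 :=
    ((summable_nat_add_iff (f := fun n => ∑ i, ‖g n i‖ ^ 2) 1).2 hgsum :)
  set A : ℝ := ∑' m : ℕ, ∑ i, ‖f (m + 1) i‖ ^ 2 with hA
  set B : ℝ := ∑' m : ℕ, ∑ i, ‖g (m + 1) i‖ ^ 2 with hB
  have hA0 : 0 ≤ A := tsum_nonneg fun n => by positivity
  have hB0 : 0 ≤ B := tsum_nonneg fun n => by positivity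
  -- the three Wronskian identities
  have hWff := wr_zero hDh hVh hC hfvec hfvec hfsum hfsum
  have hWgg := wr_zero hDh hVh hC hg hg hgsum hgsum
  have hWgf := wr_zero hDh hVh hC hg hfvec hgsum hfsum
  have hf0g : f 0 = g 0 := by
    rw [hg0]; funext i; simp [hf, hF0, Matrix.one_apply]
  set α : ℂ := star (g 0) ⬝ᵥ (Ds 0 *ᵥ f 1) with hα
  set β : ℂ := star (g 0) ⬝ᵥ (Ds 0 *ᵥ g 1) with hβ
  set S : ℂ := ∑' n : ℕ, star (g (n + 1)) ⬝ᵥ f (n + 1) with hS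
  -- rewrite the boundary terms
  have hWffL : Wr Ds f f 0 = α - starRingEnd ℂ α := by
    show star (f 0) ⬝ᵥ (Ds 0 *ᵥ f 1) - star (f 1) ⬝ᵥ (Ds 0 *ᵥ f 0)
        = star (g 0) ⬝ᵥ (Ds 0 *ᵥ f 1) - starRingEnd ℂ (star (g 0) ⬝ᵥ (Ds 0 *ᵥ f 1))
    rw [hf0g, conj_dot (hDh 0)]
  have hWggL : Wr Ds g g 0 = β - starRingEnd ℂ β := by
    show star (g 0) ⬝ᵥ (Ds 0 *ᵥ g 1) - star (g 1) ⬝ᵥ (Ds 0 *ᵥ g 0)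
        = star (g 0) ⬝ᵥ (Ds 0 *ᵥ g 1) - starRingEnd ℂ (star (g 0) ⬝ᵥ (Ds 0 *ᵥ g 1))
    rw [conj_dot (hDh 0)]
  have hWgfL : Wr Ds g f 0 = α - starRingEnd ℂ β := by
    show star (g 0) ⬝ᵥ (Ds 0 *ᵥ f 1) - star (g 1) ⬝ᵥ (Ds 0 *ᵥ f 0)
        = star (g 0) ⬝ᵥ (Ds 0 *ᵥ f 1) - starRingEnd ℂ (star (g 0) ⬝ᵥ (Ds 0 *ᵥ g 1))
    rw [hf0g, conj_dot (hDh 0)]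
  -- the diagonal tsum is real
  have hterm : ∀ m : ℕ, star (f m) ⬝ᵥ f m = ((∑ i, ‖f m i‖ ^ 2 : ℝ) : ℂ) := by
    intro m
    push_cast
    simp only [dotProduct, Pi.star_apply]
    refine Finset.sum_congr rfl fun i _ => ?_
    rw [RCLike.star_def, mul_comm, Complex.mul_conj, Complex.normSq_eq_norm_sq]
    push_cast
    ring
  have hSfA : (∑' n : ℕ, star (f (n + 1)) ⬝ᵥ f (n + 1)) = ((A : ℝ) : ℂ) := by
    rw [hA, Complex.ofReal_tsum]
    exact tsum_congr fun n => hterm (n + 1)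
  rw [hSfA] at hWff
  -- imaginary parts
  have E1 := hWffL.symm.trans hWff
  have E2 := hWggL.symm.trans hWgg
  have E3 := hWgfL.symm.trans hWgf
  have himβ : β.im = 0 := by
    have h := congrArg Complex.im E2
    simp [Complex.sub_im, Complex.conj_im, RCLike.star_def, Complex.conj_ofReal] at h
    linarith
  have him1 : α.im = -(y * A) := by
    have h := congrArg Complex.im E1
    simp [hz, Complex.sub_im, Complex.conj_im, Complex.mul_im, Complex.mul_re,
      Complex.add_im, Complex.add_re, Complex.ofReal_re, Complex.ofReal_im,
      Complex.I_re, Complex.I_im, RCLike.star_def, Complex.conj_re] at h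
    linarith
  have him3 : α.im + β.im = -(y * S.re) := by
    have h := congrArg Complex.im E3
    simp [hz, Complex.sub_im, Complex.sub_re, Complex.conj_im, Complex.conj_re,
      Complex.mul_im, Complex.mul_re, Complex.add_im, Complex.add_re,
      Complex.ofReal_re, Complex.ofReal_im, Complex.I_re, Complex.I_im,
      RCLike.star_def, Complex.conj_ofReal] at h
    linarith
  have hAS : A = S.re := by
    have h1 : y * A = y * S.re := by linarith
    exact mul_left_cancel₀ (ne_of_gt hy) h1
  -- sum of real parts
  have hb : Summable fun n : ℕ => star (g (n + 1)) ⬝ᵥ f (n + 1) := summable_bb hgsum hfsum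
  have hbre : Summable fun n : ℕ => (star (g (n + 1)) ⬝ᵥ f (n + 1)).re := by
    have := (hb.hasSum.mapL Complex.reCLM).summable
    simpa using this
  have hSre : S.re = ∑' n : ℕ, (star (g (n + 1)) ⬝ᵥ f (n + 1)).re := by
    rw [hS]
    exact Complex.re_tsum hb
  -- the key bound for every t > 0
  have key : ∀ t : ℝ, 0 < t → A ≤ (t * B + t⁻¹ * A) / 2 := by
    intro t ht
    have ht0 : t ≠ 0 := ne_of_gt ht
    have hpt : ∀ n : ℕ, (star (g (n + 1)) ⬝ᵥ f (n + 1)).re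
        ≤ (t * (∑ i, ‖g (n + 1) i‖ ^ 2)
            + t⁻¹ * (∑ i, ‖f (n + 1) i‖ ^ 2)) / 2 := by
      intro n
      have h1 : (star (g (n + 1)) ⬝ᵥ f (n + 1)).re ≤ ‖star (g (n + 1)) ⬝ᵥ f (n + 1)‖ := by
        exact Complex.re_le_norm _
      have h2 : ‖star (g (n + 1)) ⬝ᵥ f (n + 1)‖ ≤ ∑ i, ‖g (n + 1) i‖ * ‖f (n + 1) i‖ := by
        rw [dotProduct]
        refine (norm_sum_le _ _).trans (Finset.sum_le_sum fun i _ => ?_)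
        rw [Pi.star_apply, norm_mul, norm_star]
      have h3 : ∀ i : Fin l, ‖g (n + 1) i‖ * ‖f (n + 1) i‖
          ≤ (t * ‖g (n + 1) i‖ ^ 2 + t⁻¹ * ‖f (n + 1) i‖ ^ 2) / 2 := by
        intro i
        rw [le_div_iff₀ (by norm_num : (0:ℝ) < 2), ← sub_nonneg]
        have hexp : t * ‖g (n + 1) i‖ ^ 2 + t⁻¹ * ‖f (n + 1) i‖ ^ 2
            - ‖g (n + 1) i‖ * ‖f (n + 1) i‖ * 2
            = t⁻¹ * (t * ‖g (n + 1) i‖ - ‖f (n + 1) i‖) ^ 2 := by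
          field_simp
          ring
        rw [hexp]
        positivity
      calc (star (g (n + 1)) ⬝ᵥ f (n + 1)).re
          ≤ ∑ i, ‖g (n + 1) i‖ * ‖f (n + 1) i‖ := h1.trans h2
        _ ≤ ∑ i, (t * ‖g (n + 1) i‖ ^ 2 + t⁻¹ * ‖f (n + 1) i‖ ^ 2) / 2 :=
            Finset.sum_le_sum fun i _ => h3 i
        _ = (t * (∑ i, ‖g (n + 1) i‖ ^ 2)
              + t⁻¹ * (∑ i, ‖f (n + 1) i‖ ^ 2)) / 2 := by
            rw [← Finset.sum_div, Finset.sum_add_distrib, ← Finset.mul_sum, ← Finset.mul_sum]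
    have hR1 : Summable fun n : ℕ => t * (∑ i, ‖g (n + 1) i‖ ^ 2) :=
      hGn.mul_left t
    have hR2 : Summable fun n : ℕ => t⁻¹ * (∑ i, ‖f (n + 1) i‖ ^ 2) :=
      hFn.mul_left t⁻¹
    have hRS : Summable fun n : ℕ => (t * (∑ i, ‖g (n + 1) i‖ ^ 2)
        + t⁻¹ * (∑ i, ‖f (n + 1) i‖ ^ 2)) / 2 := (hR1.add hR2).div_const 2
    calc A = S.re := hAS
      _ = ∑' n : ℕ, (star (g (n + 1)) ⬝ᵥ f (n + 1)).re := hSre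
      _ ≤ ∑' n : ℕ, (t * (∑ i, ‖g (n + 1) i‖ ^ 2)
            + t⁻¹ * (∑ i, ‖f (n + 1) i‖ ^ 2)) / 2 :=
          Summable.tsum_le_tsum hpt hbre hRS
      _ = (t * B + t⁻¹ * A) / 2 := by
          rw [tsum_div_const, Summable.tsum_add hR1 hR2, tsum_mul_left, tsum_mul_left, hA, hB]
  exact le_of_t_bound hA0 hB0 key

end MainAux

/-- If the `k`-th column of the Jost solution at `x` (i.e. a solution at the
real energy `x` with initial value `e_k`) is square-summable at `+∞`, then the
`k`-th column of the Jost solution at `x + iy` has a smaller `ℓ²`-norm. -/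
theorem jost_column_norm_le
    {Ω : Type*} [MeasurableSpace Ω] (ν : Measure Ω) [IsProbabilityMeasure ν]
    (T : Equiv.Perm Ω) (hT : Ergodic (⇑T) ν)
    {l : ℕ} (D V : Ω → Matrix (Fin l) (Fin l) ℝ)
    (hDsymm : ∀ ω, (D ω).IsSymm) (hDinv : ∀ ω, IsUnit (D ω))
    (hDbdd : ∃ C : ℝ, ∀ ω i j, |D ω i j| ≤ C)
    (hVsymm : ∀ ω, (V ω).IsSymm)
    (ω : Ω) (x y : ℝ) (hy : 0 < y) (k : Fin l)
    (F : ℕ → Matrix (Fin l) (Fin l) ℂ)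
    (hF : IsJost (fun n => cx (D ((T ^ n) ω))) (fun n => cx (V ((T ^ n) ω)))
      ((x : ℂ) + (y : ℂ) * Complex.I) F)
    (g : ℕ → Fin l → ℂ)
    (hg : IsVecSol (fun n => cx (D ((T ^ n) ω))) (fun n => cx (V ((T ^ n) ω)))
      ((x : ℂ)) g)
    (hg0 : g 0 = fun i => if i = k then 1 else 0)
    (hgsum : Summable (fun n : ℕ => ∑ i, ‖g n i‖ ^ 2)) :
    ∑' m : ℕ, ∑ i, ‖F (m + 1) i k‖ ^ 2
      ≤ ∑' m : ℕ, ∑ i, ‖g (m + 1) i‖ ^ 2 := by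

  obtain ⟨C, hCb⟩ := hDbdd
  have hherm : ∀ (A : Matrix (Fin l) (Fin l) ℝ), A.IsSymm → (cx A)ᴴ = cx A := by
    intro A hA
    ext i j
    simp only [cx, Matrix.conjTranspose_apply, Matrix.map_apply, RCLike.star_def,
      Complex.conj_ofReal]
    exact_mod_cast hA.apply i j
  have hDh : ∀ n : ℕ, ((fun n => cx (D ((T ^ n) ω))) n)ᴴ = (fun n => cx (D ((T ^ n) ω))) n :=
    fun n => hherm _ (hDsymm _)
  have hVh : ∀ n : ℕ, ((fun n => cx (V ((T ^ n) ω))) n)ᴴ = (fun n => cx (V ((T ^ n) ω))) n :=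
    fun n => hherm _ (hVsymm _)
  have hC : ∀ (n : ℕ) (i j : Fin l),
      ‖(fun n => cx (D ((T ^ n) ω))) n i j‖ ≤ C := by
    intro n i j
    simpa [cx, Complex.norm_real, Real.norm_eq_abs] using hCb ((T ^ n) ω) i j
  exact main_aux hDh hVh hC hy k hF hg hg0 hgsum
end
end
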